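/- Let Y be a nonempty subset of a topological vector space E and let K be an (n−1)-dimensional simplex in a Hausdorff topological vector space F. If T : K → 2^Y is a weakly naturally quasi-concave correspondence, then T admits a continuous selection on K, i.e. there exists a continuous function f : K → Y such that f(x) ∈ T(x) for every x ∈ K. -/

import Mathlib

/-- A correspondence `T : X → 2^Y` is *weakly naturally quasi-concave* (WNQ) if for each `n`
and each finite family `x_1, ..., x_n` in `X` there exist `y_i ∈ T(x_i)` and a map
`g = (g_1, ..., g_n) : Δ_{n-1} → Δ_{n-1}` with each `g_i` continuous, `g_i 1 = 1`, `g_i 0 = 0`,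
such that for every `(λ_1, ..., λ_n) ∈ Δ_{n-1}` one has
`∑ i, g_i (λ_i) • y_i ∈ T (∑ i, λ_i • x_i)`. -/
def IsWNQ {E F : Type*} [AddCommMonoid E] [Module ℝ E]
    [AddCommMonoid F] [Module ℝ F] (X : Set E) (T : E → Set F) : Prop :=
  ∀ (n : ℕ) (x : Fin n → E), (∀ i, x i ∈ X) →
    ∃ (y : Fin n → F) (g : Fin n → ℝ → ℝ),
      (∀ i, y i ∈ T (x i)) ∧
      (∀ i, Continuous (g i)) ∧
      (∀ i, g i 1 = 1) ∧
      (∀ i, g i 0 = 0) ∧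
      ∀ lam ∈ stdSimplex ℝ (Fin n),
        (fun i => g i (lam i)) ∈ stdSimplex ℝ (Fin n) ∧
        ∑ i, g i (lam i) • y i ∈ T (∑ i, lam i • x i)

/-- **Selection theorem.** Let `Y` be a nonempty subset of a topological vector space `E` and
`K` an `(n-1)`-dimensional simplex (the convex hull of `n` affinely independent points) in a
Hausdorff topological vector space `F`. If `T : K → 2^Y` is a weakly naturally quasi-concave
correspondence, then `T` has a continuous selection on `K`. -/
theorem selection_theorem_of_WNQ
    {E F : Type*}
    [AddCommGroup E] [Module ℝ E] [TopologicalSpace E]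
    [IsTopologicalAddGroup E] [ContinuousSMul ℝ E]
    [AddCommGroup F] [Module ℝ F] [TopologicalSpace F]
    [IsTopologicalAddGroup F] [ContinuousSMul ℝ F] [T2Space F]
    (Y : Set E) (hY : Y.Nonempty)
    (n : ℕ) (a : Fin n → F) (ha : AffineIndependent ℝ a)
    (K : Set F) (hK : K = convexHull ℝ (Set.range a))
    (T : F → Set E) (hTY : ∀ x ∈ K, T x ⊆ Y)
    (hT : IsWNQ K T) :
    ∃ f : F → E, ContinuousOn f K ∧ ∀ x ∈ K, f x ∈ T x := by
  have haK : ∀ i, a i ∈ K := fun i => hK ▸ subset_convexHull ℝ _ (Set.mem_range_self i)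
  obtain ⟨y, g, hy, hgc, hg1, hg0, hmain⟩ := hT n a haK
  set S : Set (Fin n → ℝ) := stdSimplex ℝ (Fin n) with hS
  -- the linear map lam ↦ ∑ lam i • a i
  set φ : (Fin n → ℝ) →ₗ[ℝ] F := ∑ i, (LinearMap.proj i).smulRight (a i) with hφdef
  have hφ : ∀ lam, φ lam = ∑ i, lam i • a i := by
    intro lam; simp [hφdef, LinearMap.sum_apply]
  have hφc : Continuous φ := by
    simp only [funext hφ]
    exact continuous_finset_sum _ fun i _ => (continuous_apply i).smul continuous_const
  -- image of S is K
  have himg : φ '' S = K := by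
    apply Set.Subset.antisymm
    · rintro _ ⟨lam, hlam, rfl⟩
      rw [hφ, hK]
      rw [← Finset.univ.affineCombination_eq_linear_combination a lam hlam.2]
      exact affineCombination_mem_convexHull (fun i _ => hlam.1 i) hlam.2
    · rw [hS, hK, ← convexHull_basis_eq_stdSimplex (Fin n) (R := ℝ), LinearMap.image_convexHull,
        ← Set.range_comp]
      apply convexHull_mono
      rintro _ ⟨i, rfl⟩
      refine ⟨i, ?_⟩
      simp [Function.comp, hφ]
  -- injectivity of φ on S
  have hinj : Set.InjOn φ S := by
    intro lam hlam mu hmu heq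
    rw [hφ, hφ, ← Finset.univ.affineCombination_eq_linear_combination a lam hlam.2,
      ← Finset.univ.affineCombination_eq_linear_combination a mu hmu.2] at heq
    exact (affineIndependent_iff_eq_of_fintype_affineCombination_eq ℝ a).mp ha lam mu
      hlam.2 hmu.2 heq
  -- homeomorphism S ≃ₜ K
  haveI : CompactSpace S := isCompact_iff_compactSpace.mp (isCompact_stdSimplex ℝ (Fin n))
  let e : S ≃ K := Equiv.ofBijective (fun p => ⟨φ p.1, himg ▸ Set.mem_image_of_mem _ p.2⟩)
    ⟨fun p q h => Subtype.ext (hinj p.2 q.2 (congrArg Subtype.val h)),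
     by
      rintro ⟨x, hx⟩
      obtain ⟨lam, hlam, hl⟩ := himg.symm ▸ hx
      exact ⟨⟨lam, hlam⟩, Subtype.ext hl⟩⟩
  have hec : Continuous e := Continuous.subtype_mk (hφc.comp continuous_subtype_val) _
  let eh : S ≃ₜ K := hec.homeoOfEquivCompactToT2 (f := e)
  -- the selection
  classical
  let f : F → E := fun x =>
    if hx : x ∈ K then ∑ i, g i ((eh.symm ⟨x, hx⟩).1 i) • y i else hY.choose
  have hrestrict : ∀ (p : K), f p.1 = ∑ i, g i ((eh.symm p).1 i) • y i := by
    rintro ⟨x, hx⟩; simp only [f, dif_pos hx]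
  refine ⟨f, ?_, ?_⟩
  · rw [continuousOn_iff_continuous_restrict]
    have : (K.domRestrict f) = fun p : K => ∑ i, g i ((eh.symm p).1 i) • y i := by
      funext p; exact hrestrict p
    rw [this]
    refine continuous_finset_sum _ fun i _ => Continuous.smul ?_ continuous_const
    exact (hgc i).comp ((continuous_apply i).comp
      (continuous_subtype_val.comp eh.symm.continuous))
  · intro x hx
    rw [hrestrict ⟨x, hx⟩]
    set p := eh.symm ⟨x, hx⟩
    have hpx : φ p.1 = x := congrArg Subtype.val (eh.apply_symm_apply ⟨x, hx⟩)
    have := (hmain p.1 p.2).2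
    rwa [← hφ, hpx] at this
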